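/- The vector recurrence v(k) = A·v(k-1), where A is the 3×3 integer matrix [[2,1,-2],[1,0,0],[0,1,0]] and v(3) = (14,6,2), satisfies: the first coordinate of v(k) equals 2^(k+1) - 2 for all k ≥ 3. -/
import Mathlib


theorem stmt_13 (A : Matrix (Fin 3) (Fin 3) ℤ)
    (hA : A = !![2, 1, -2; 1, 0, 0; 0, 1, 0])
    (v : ℕ → Fin 3 → ℤ)
    (hv3 : v 3 = ![14, 6, 2])
    (hrec : ∀ k, 4 ≤ k → v k = A.mulVec (v (k - 1))) :
    ∀ k, 3 ≤ k → v k 0 = 2 ^ (k + 1) - 2 := by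
  have key : ∀ k, 3 ≤ k → v k = ![2 ^ (k + 1) - 2, 2 ^ k - 2, 2 ^ (k - 1) - 2] := by
    intro k hk
    induction k, hk using Nat.le_induction with
    | base => rw [hv3]; norm_num
    | succ n hn ih =>
      obtain ⟨m, rfl⟩ : ∃ m, n = m + 1 := ⟨n - 1, by omega⟩
      rw [hrec (m + 1 + 1) (by omega), Nat.add_sub_cancel, ih, hA]
      funext i
      fin_cases i <;>
        simp [Matrix.mulVec, dotProduct, Fin.sum_univ_three] <;> ring
  intro k hk
  rw [key k hk]
  simp
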